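/- Let p be a prime and let m ≥ 1, r be integers with 0 ≤ r ≤ m(p−1), and suppose d_RM(r,m) ≥ 3. Then for every pair of distinct points s_1, s_2 ∈ 𝔽_p^m, the minimum over all nonzero reduced polynomials f ∈ 𝔽_p[x_1,…,x_m] of total degree at most r of #{v ∈ 𝔽_p^m : v ∉ {s_1, s_2} and f(v) ≠ 0} equals d_RM(r,m) − 2. In particular this minimum (the distance of the twice-punctured Reed–Muller code) is independent of the two puncture locations. -/

import Mathlib

namespace RMaux

open MvPolynomial Finset


/-- `pd p r m = p * d_RM(r,m)` for `r ≤ m(p-1)`. -/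
def pd (p r m : ℕ) : ℕ := (p - r % (p-1)) * p ^ (m - r / (p-1))

lemma mod_div_of_eq {p r a b : ℕ} (hp : 2 ≤ p) (hab : r = a * (p - 1) + b) (hb : b < p - 1) :
    r % (p-1) = b ∧ r / (p-1) = a := by
  constructor
  · subst hab; rw [Nat.mul_comm, Nat.mul_add_mod]; exact Nat.mod_eq_of_lt hb
  · subst hab; rw [Nat.mul_comm, Nat.mul_add_div (by omega), Nat.div_eq_of_lt hb, Nat.add_zero]

lemma pd_eq {p r m a b : ℕ} (hp : 2 ≤ p) (hab : r = a * (p - 1) + b) (hb : b ≤ p - 2) :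
    pd p r m = (p - b) * p ^ (m - a) := by
  obtain ⟨h1, h2⟩ := mod_div_of_eq hp hab (by omega)
  rw [pd, h1, h2]

lemma pd_succ_le {p r m : ℕ} (hp : 2 ≤ p) (h : r + 1 ≤ m * (p-1)) :
    pd p (r+1) m ≤ pd p r m := by
  obtain ⟨a, b, hab, hblt⟩ : ∃ a b, r = a * (p-1) + b ∧ b < p - 1 :=
    ⟨r / (p-1), r % (p-1), by rw [Nat.mul_comm]; exact (Nat.div_add_mod r (p-1)).symm,
      Nat.mod_lt _ (by omega)⟩
  obtain ⟨h1, h2⟩ := mod_div_of_eq hp hab hblt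
  by_cases hcase : b < p - 2
  · obtain ⟨h1', h2'⟩ := mod_div_of_eq hp (show r+1 = a * (p-1) + (b+1) by omega) (by omega)
    rw [pd, pd, h1, h2, h1', h2']
    exact Nat.mul_le_mul_right _ (by omega)
  · -- b = p - 2, so r + 1 = (a+1) * (p-1)
    have hr1 : r + 1 = (a+1) * (p-1) + 0 := by
      rw [add_mul, one_mul]; omega
    obtain ⟨h1', h2'⟩ := mod_div_of_eq hp hr1 (by omega)
    have ham : a + 1 ≤ m := by
      have h5 : (a+1) * (p-1) ≤ m * (p-1) := by omega
      exact Nat.le_of_mul_le_mul_right h5 (by omega)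
    rw [pd, pd, h1, h2, h1', h2', Nat.sub_zero]
    have hpow : p ^ (m - a) = p * p ^ (m - (a + 1)) := by
      rw [← pow_succ']; congr 1; omega
    rw [hpow]
    have h2b : p - b = 2 := by omega
    rw [h2b]
    nlinarith [pow_pos (show 0 < p by omega) (m - (a + 1))]

lemma pd_anti {p r r' m : ℕ} (hp : 2 ≤ p) (h : r ≤ r') (h' : r' ≤ m * (p-1)) :
    pd p r' m ≤ pd p r m := by
  induction r', h using Nat.le_induction with
  | base => exact le_rfl
  | succ n hn ih => exact le_trans (pd_succ_le hp h') (ih (by omega))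

/-- The key recursion inequality. -/
lemma pd_key {p t r r'' m : ℕ} (hp : 2 ≤ p) (ht : t ≤ p - 1) (htr : t ≤ r)
    (hr : r ≤ (m+1) * (p-1)) (hr2 : r'' ≤ r - t) (hr3 : r'' ≤ m * (p-1)) :
    pd p r (m+1) ≤ (p - t) * pd p r'' m := by
  have key : pd p r (m+1) ≤ (p - t) * pd p (min (r - t) (m * (p-1))) m := by
    obtain ⟨a, b, hab, hblt⟩ : ∃ a b, r = a * (p-1) + b ∧ b < p - 1 :=
      ⟨r / (p-1), r % (p-1), by rw [Nat.mul_comm]; exact (Nat.div_add_mod r (p-1)).symm,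
        Nat.mod_lt _ (by omega)⟩
    have hpd : pd p r (m+1) = (p - b) * p ^ (m + 1 - a) := pd_eq hp hab (by omega)
    by_cases hmin : r - t ≤ m * (p-1)
    · rw [min_eq_left hmin]
      by_cases htb : t ≤ b
      · -- r - t = a(p-1) + (b-t)
        have hrt : r - t = a * (p-1) + (b - t) := by omega
        rw [pd_eq hp hrt (by omega), hpd]
        have ham : a ≤ m := by
          have h5 : a * (p-1) ≤ m * (p-1) := by omega
          exact Nat.le_of_mul_le_mul_right h5 (by omega)
        have hpow : p ^ (m + 1 - a) = p * p ^ (m - a) := by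
          rw [← pow_succ']; congr 1; omega
        rw [hpow, ← Nat.mul_assoc, ← Nat.mul_assoc]
        apply Nat.mul_le_mul_right
        -- (p-b)*p ≤ (p-t)*(p-(b-t))
        have e1 : p - (b - t) = (p - b) + t := by omega
        rw [e1]
        zify [show b ≤ p by omega, show t ≤ p by omega]
        nlinarith [mul_nonneg (show (0:ℤ) ≤ (t:ℤ) by positivity)
          (show (0:ℤ) ≤ (b:ℤ) - (t:ℤ) by omega)]
      · -- t > b : r - t = (a-1)(p-1) + (b + (p-1) - t)
        have ha1 : 1 ≤ a := by
          by_contra hc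
          have : a = 0 := by omega
          subst this
          simp at hab
          omega
        have hle : p - 1 ≤ a * (p-1) := by
          have := Nat.mul_le_mul_right (p-1) ha1
          simpa using this
        have hrt : r - t = (a-1) * (p-1) + (b + (p-1) - t) := by
          rw [Nat.sub_one_mul]; omega
        rw [pd_eq hp hrt (by omega), hpd]
        have ham : a - 1 ≤ m := by
          have h5 : (a-1) * (p-1) ≤ m * (p-1) := by omega
          exact Nat.le_of_mul_le_mul_right h5 (by omega)
        have hpow : m + 1 - a = m - (a - 1) := by omega
        rw [hpow, ← Nat.mul_assoc]
        apply Nat.mul_le_mul_right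
        -- (p - b) ≤ (p-t)(t+1-b)
        have e1 : p - (b + (p-1) - t) = (t - b) + 1 := by omega
        rw [e1, Nat.mul_add, Nat.mul_one]
        have e4 : t - b ≤ (p - t) * (t - b) := Nat.le_mul_of_pos_left _ (by omega)
        omega
    · -- r - t > m(p-1): min = m(p-1), pd(m(p-1), m) = p
      rw [min_eq_right (by omega)]
      have hmm : pd p (m * (p-1)) m = p := by
        rw [pd_eq hp (show m * (p-1) = m * (p-1) + 0 by omega) (by omega)]
        simp
      rw [hmm, hpd]
      have ham : m ≤ a := by
        by_contra hc
        have h5 : (a+1) * (p-1) ≤ m * (p-1) := Nat.mul_le_mul_right _ (by omega)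
        have h6 : a * (p-1) + (p-1) = (a+1)*(p-1) := by ring
        omega
      have ham2 : a ≤ m + 1 := by
        by_contra hc
        have h5 : (m+2) * (p-1) ≤ a * (p-1) := Nat.mul_le_mul_right _ (by omega)
        have h6 : (m+2) * (p-1) = (m+1)*(p-1) + (p-1) := by ring
        omega
      rcases Nat.eq_or_lt_of_le ham2 with hc | hc
      · -- a = m+1 forces b = 0
        subst hc
        have hb0 : b = 0 := by omega
        subst hb0
        simp only [Nat.sub_self, pow_zero, Nat.mul_one, Nat.sub_zero]
        exact Nat.le_mul_of_pos_left _ (by omega)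
      · -- a = m: then t < b
        have hcm : a = m := by omega
        subst hcm
        have htb : t < b := by omega
        have hpow : a + 1 - a = 1 := by omega
        rw [hpow, pow_one]
        exact Nat.mul_le_mul_right _ (by omega)
  calc pd p r (m+1) ≤ (p - t) * pd p (min (r - t) (m * (p-1))) m := key
  _ ≤ (p - t) * pd p r'' m := by
      apply Nat.mul_le_mul_left
      exact pd_anti hp (le_min hr2 hr3) (min_le_right _ _)


def redExp (p e : ℕ) : ℕ := if e = 0 then 0 else (e - 1) % (p - 1) + 1

lemma redExp_zero (p : ℕ) : redExp p 0 = 0 := rfl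

lemma redExp_le (p e : ℕ) : redExp p e ≤ e := by
  unfold redExp
  split
  · omega
  · have := Nat.mod_le (e - 1) (p - 1); omega

lemma redExp_le_pred {p : ℕ} (hp : 2 ≤ p) (e : ℕ) : redExp p e ≤ p - 1 := by
  unfold redExp
  split
  · omega
  · have := Nat.mod_lt (e - 1) (y := p - 1) (by omega); omega

lemma pow_redExp (p : ℕ) [Fact p.Prime] (x : ZMod p) (e : ℕ) :
    x ^ redExp p e = x ^ e := by
  have hp : 2 ≤ p := (Fact.out : p.Prime).two_le
  rcases Nat.eq_zero_or_pos e with he | he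
  · subst he; rfl
  rw [redExp, if_neg (by omega)]
  rcases eq_or_ne x 0 with hx | hx
  · subst hx
    rw [zero_pow (by omega), zero_pow (by omega)]
  · have h1 : x ^ (p - 1) = 1 := ZMod.pow_card_sub_one_eq_one hx
    have he2 : e = ((e - 1) % (p - 1) + 1) + (p - 1) * ((e-1) / (p-1)) := by
      have := Nat.div_add_mod (e - 1) (p - 1); omega
    conv_rhs => rw [he2, pow_add, pow_mul, h1, one_pow, mul_one]

variable {p : ℕ} {m : ℕ}

/-- Reduce all exponents of a polynomial modulo the relation `x^p = x`. -/
noncomputable def reduceAll (p : ℕ) (f : MvPolynomial (Fin m) (ZMod p)) :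
    MvPolynomial (Fin m) (ZMod p) :=
  f.support.sum fun s => monomial (Finsupp.mapRange (redExp p) (redExp_zero p) s) (f.coeff s)

lemma eval_reduceAll [Fact p.Prime] (f : MvPolynomial (Fin m) (ZMod p)) (v : Fin m → ZMod p) :
    eval v (reduceAll p f) = eval v f := by
  conv_rhs => rw [← support_sum_monomial_coeff f]
  rw [reduceAll, map_sum, map_sum]
  apply Finset.sum_congr rfl
  intro s _
  rw [eval_monomial, eval_monomial]
  congr 1
  rw [Finsupp.prod_mapRange_index (fun a => by simp [redExp])]
  exact Finsupp.prod_congr fun i _ => pow_redExp p (v i) (s i)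

lemma support_reduceAll (f : MvPolynomial (Fin m) (ZMod p)) :
    ∀ u ∈ (reduceAll p f).support, ∃ s ∈ f.support, u = Finsupp.mapRange (redExp p) (redExp_zero p) s := by
  intro u hu
  have h1 := MvPolynomial.support_sum
    (s := f.support) (f := fun s => monomial (Finsupp.mapRange (redExp p) (redExp_zero p) s) (f.coeff s)) hu
  rw [Finset.mem_biUnion] at h1
  obtain ⟨s, hs, hmem⟩ := h1
  refine ⟨s, hs, ?_⟩
  have := support_monomial_subset hmem
  simpa using this

lemma degreeOf_reduceAll (hp : 2 ≤ p) (f : MvPolynomial (Fin m) (ZMod p)) (i : Fin m) :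
    (reduceAll p f).degreeOf i ≤ p - 1 := by
  rw [degreeOf_le_iff]
  intro u hu
  obtain ⟨s, _, rfl⟩ := support_reduceAll f u hu
  rw [Finsupp.mapRange_apply]
  exact redExp_le_pred hp _

lemma totalDegree_reduceAll_le (f : MvPolynomial (Fin m) (ZMod p)) :
    (reduceAll p f).totalDegree ≤ f.totalDegree := by
  apply Finset.sup_le
  intro u hu
  obtain ⟨s, hs, rfl⟩ := support_reduceAll f u hu
  have h1 : ((Finsupp.mapRange (redExp p) (redExp_zero p) s).sum fun _ e => e)
      = ∑ i : Fin m, redExp p (s i) :=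
    (Finsupp.sum_fintype _ _ (fun _ => rfl)).trans (by simp [Finsupp.mapRange_apply])
  have h2 : (s.sum fun _ e => e) = ∑ i : Fin m, s i :=
    Finsupp.sum_fintype _ _ (fun _ => rfl)
  calc ((Finsupp.mapRange (redExp p) (redExp_zero p) s).sum fun _ e => e)
      = ∑ i : Fin m, redExp p (s i) := h1
  _ ≤ ∑ i : Fin m, s i := Finset.sum_le_sum fun i _ => redExp_le p (s i)
  _ = s.sum fun _ e => e := h2.symm
  _ ≤ f.totalDegree := le_totalDegree hs



lemma red_totalDegree_le {p m : ℕ} {R : Type*} [CommSemiring R] (f : MvPolynomial (Fin m) R)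
    (hred : ∀ i, f.degreeOf i ≤ p - 1) : f.totalDegree ≤ m * (p-1) := by
  apply Finset.sup_le
  intro s hs
  have h1 : (s.sum fun _ e => e) = ∑ i : Fin m, s i :=
    Finsupp.sum_fintype _ _ (fun _ => rfl)
  rw [h1]
  calc ∑ i : Fin m, s i ≤ ∑ _i : Fin m, (p-1) := by
        apply Finset.sum_le_sum
        intro i _
        exact (degreeOf_le_iff.mp (hred i)) s hs
  _ = m * (p-1) := by simp [Finset.sum_const, Finset.card_univ]

lemma count_ge (p : ℕ) [Fact p.Prime] :
    ∀ (m : ℕ) (f : MvPolynomial (Fin m) (ZMod p)), f ≠ 0 →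
    (∀ i, f.degreeOf i ≤ p - 1) →
    pd p f.totalDegree m ≤
      p * (Finset.univ.filter fun v : Fin m → ZMod p => MvPolynomial.eval v f ≠ 0).card := by
  have hp : 2 ≤ p := (Fact.out : p.Prime).two_le
  intro m
  induction m with
  | zero =>
    intro f hf _
    obtain ⟨c, rfl⟩ := MvPolynomial.C_surjective (Fin 0) f
    have hc : c ≠ 0 := by simpa using hf
    have h1 : (Finset.univ.filter fun v : Fin 0 → ZMod p =>
        MvPolynomial.eval v (C c : MvPolynomial (Fin 0) (ZMod p)) ≠ 0).card = 1 := by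
      rw [Finset.filter_true_of_mem (fun v _ => by simpa using hc)]
      simp
    rw [h1, totalDegree_C]
    simp [pd]
  | succ m ih =>
    intro f hf hred
    set K := ZMod p
    set q := finSuccEquiv K m f with hqdef
    set t := q.natDegree with htdef
    set g := q.coeff t with hgdef
    have hq0 : q ≠ 0 := by
      intro h
      apply hf
      rw [hqdef] at h
      have := congrArg (finSuccEquiv K m).symm h
      simpa using this
    have hg0 : g ≠ 0 := Polynomial.leadingCoeff_ne_zero.mpr hq0
    have ht1 : t ≤ p - 1 := by
      rw [htdef, natDegree_finSuccEquiv]; exact hred 0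
    have htr : t ≤ f.totalDegree := by
      rw [htdef, natDegree_finSuccEquiv]; exact degreeOf_le_totalDegree f 0
    have hgred : ∀ i, g.degreeOf i ≤ p - 1 :=
      fun i => le_trans (degreeOf_coeff_finSuccEquiv f i t) (hred i.succ)
    have hgdeg : g.totalDegree ≤ f.totalDegree - t := by
      have := totalDegree_coeff_finSuccEquiv_add_le f t hg0
      rw [← hqdef, ← hgdef] at this
      omega
    have hgdeg2 : g.totalDegree ≤ m * (p-1) := red_totalDegree_le g hgred
    -- decompose the count
    have hcard : (Finset.univ.filter fun v : Fin (m+1) → K =>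
        MvPolynomial.eval v f ≠ 0).card
        = ∑ z : (Fin m → K) × K,
          if MvPolynomial.eval (Fin.cons z.2 z.1) f ≠ 0 then 1 else 0 := by
      rw [Finset.card_filter]
      rw [← Equiv.sum_comp ((Equiv.prodComm (Fin m → K) K).trans
        (Fin.consEquiv fun _ => K)) (fun v => if MvPolynomial.eval v f ≠ 0 then 1 else 0)]
      rfl
    have hinner : ∀ y : Fin m → K, MvPolynomial.eval y g ≠ 0 →
        p - t ≤ (Finset.univ.filter fun x : K =>
          MvPolynomial.eval (Fin.cons x y) f ≠ 0).card := by
      intro y hy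
      set qy := Polynomial.map (MvPolynomial.eval y) q with hqy
      have hqy0 : qy ≠ 0 := by
        intro h
        apply hy
        have : qy.coeff t = 0 := by rw [h]; simp
        rwa [hqy, Polynomial.coeff_map] at this
      have hdeg : qy.natDegree ≤ t := Polynomial.natDegree_map_le
      have hzcard : (Finset.univ.filter fun x : K => Polynomial.eval x qy = 0).card ≤ t := by
        calc (Finset.univ.filter fun x : K => Polynomial.eval x qy = 0).card
            ≤ qy.roots.toFinset.card := by
              apply Finset.card_le_card
              intro x hx
              simp only [Finset.mem_filter] at hx
              rw [Multiset.mem_toFinset, Polynomial.mem_roots hqy0]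
              exact hx.2
        _ ≤ Multiset.card qy.roots := Multiset.toFinset_card_le _
        _ ≤ qy.natDegree := Polynomial.card_roots' qy
        _ ≤ t := hdeg
      have heq : (Finset.univ.filter fun x : K =>
          MvPolynomial.eval (Fin.cons x y) f ≠ 0)
          = (Finset.univ.filter fun x : K => ¬ Polynomial.eval x qy = 0) := by
        apply Finset.filter_congr
        intro x _
        rw [eval_eq_eval_mv_eval']
      have htotal := Finset.card_filter_add_card_filter_not
        (s := (Finset.univ : Finset K)) (p := fun x : K => Polynomial.eval x qy = 0)
      have hK : (Finset.univ : Finset K).card = p := by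
        rw [Finset.card_univ]; exact ZMod.card p
      rw [heq]
      omega
    -- assemble
    have hsum : ∑ z : (Fin m → K) × K,
          (if MvPolynomial.eval (Fin.cons z.2 z.1) f ≠ 0 then 1 else 0)
        = ∑ y : Fin m → K, (Finset.univ.filter fun x : K =>
          MvPolynomial.eval (Fin.cons x y) f ≠ 0).card := by
      rw [Fintype.sum_prod_type]
      exact Finset.sum_congr rfl fun y _ => by rw [Finset.card_filter]
    set N := (Finset.univ.filter fun y : Fin m → K => MvPolynomial.eval y g ≠ 0)
    have hmain : N.card * (p - t) ≤ (Finset.univ.filter fun v : Fin (m+1) → K =>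
        MvPolynomial.eval v f ≠ 0).card := by
      rw [hcard, hsum]
      calc N.card * (p - t) = ∑ _y ∈ N, (p - t) := by rw [Finset.sum_const, smul_eq_mul]
      _ ≤ ∑ y ∈ N, (Finset.univ.filter fun x : K =>
            MvPolynomial.eval (Fin.cons x y) f ≠ 0).card := by
          apply Finset.sum_le_sum
          intro y hy
          exact hinner y (by simpa [N] using hy)
      _ ≤ ∑ y : Fin m → K, (Finset.univ.filter fun x : K =>
            MvPolynomial.eval (Fin.cons x y) f ≠ 0).card :=
          Finset.sum_le_sum_of_subset (Finset.subset_univ _)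
    have hIH := ih g hg0 hgred
    have hkey : pd p f.totalDegree (m+1) ≤ (p - t) * pd p g.totalDegree m :=
      pd_key hp ht1 htr (red_totalDegree_le f hred) hgdeg hgdeg2
    calc pd p f.totalDegree (m+1) ≤ (p - t) * pd p g.totalDegree m := hkey
    _ ≤ (p - t) * (p * N.card) := Nat.mul_le_mul_left _ hIH
    _ = p * (N.card * (p - t)) := by ring
    _ ≤ p * _ := Nat.mul_le_mul_left _ hmain


lemma one_sub_pow_ne_zero_iff (p : ℕ) [Fact p.Prime] (x : ZMod p) :
    (1 - x^(p-1) ≠ 0) ↔ x = 0 := by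
  have hp : 2 ≤ p := (Fact.out : p.Prime).two_le
  rcases eq_or_ne x 0 with h | h
  · subst h
    rw [zero_pow (by omega)]
    simp
  · rw [ZMod.pow_card_sub_one_eq_one h]
    simp [h]

lemma exists_good_poly (p : ℕ) [Fact p.Prime] {m aa bb : ℕ} (k : Fin m) (A : Finset (Fin m))
    (hkA : k ∉ A) (hA : A.card = aa) (Cs : Finset (ZMod p)) (hCs : Cs.card = bb)
    (s₁ s₂ : Fin m → ZMod p) (hk : s₁ k ≠ s₂ k) (h1C : s₁ k ∉ Cs) (h2C : s₂ k ∉ Cs) :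
    ∃ f : MvPolynomial (Fin m) (ZMod p), f ≠ 0 ∧ (∀ i, f.degreeOf i ≤ p - 1) ∧
      f.totalDegree ≤ aa * (p-1) + bb ∧
      s₁ ∈ (Finset.univ.filter fun v => eval v f ≠ 0) ∧
      s₂ ∈ (Finset.univ.filter fun v => eval v f ≠ 0) ∧
      (Finset.univ.filter fun v : Fin m → ZMod p => eval v f ≠ 0).card
        = (p - bb) * p ^ (m - aa - 1) := by
  have hp : 2 ≤ p := (Fact.out : p.Prime).two_le
  set lam : Fin m → ZMod p := fun i => (s₂ i - s₁ i) * (s₂ k - s₁ k)⁻¹ with hlam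
  set ell : Fin m → MvPolynomial (Fin m) (ZMod p) :=
    fun i => X i - C (s₁ i) - C (lam i) * (X k - C (s₁ k)) with hell
  set g : MvPolynomial (Fin m) (ZMod p) :=
    (∏ i ∈ A, (1 - (ell i)^(p-1))) * ∏ c ∈ Cs, (X k - C c) with hg
  set f := reduceAll p g with hf
  set P : (Fin m → ZMod p) → Prop :=
    fun v => (∀ i ∈ A, v i - s₁ i - lam i * (v k - s₁ k) = 0) ∧ v k ∉ Cs with hP
  -- evaluation of g
  have hevalg : ∀ v, eval v g ≠ 0 ↔ P v := by
    intro v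
    have he : eval v g = (∏ i ∈ A, (1 - (v i - s₁ i - lam i * (v k - s₁ k))^(p-1)))
        * ∏ c ∈ Cs, (v k - c) := by
      rw [hg, hell]
      simp only [map_mul, map_prod, map_sub, map_pow, map_one, eval_X, eval_C]
    rw [he, mul_ne_zero_iff, Finset.prod_ne_zero_iff, Finset.prod_ne_zero_iff]
    apply and_congr
    · exact forall₂_congr fun i _ => one_sub_pow_ne_zero_iff p _
    · constructor
      · intro h hc
        exact h _ hc (by simp)
      · intro h c hc he2
        rw [sub_eq_zero] at he2
        exact h (he2 ▸ hc)
  -- eval of f agrees with g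
  have hevalf : ∀ v, eval v f ≠ 0 ↔ P v := by
    intro v; rw [hf, eval_reduceAll]; exact hevalg v
  -- s₁ and s₂ satisfy P
  have hP1 : P s₁ := ⟨fun i _ => by simp, h1C⟩
  have hne : s₂ k - s₁ k ≠ 0 := sub_ne_zero.mpr (Ne.symm hk)
  have hP2 : P s₂ := by
    refine ⟨fun i _ => ?_, h2C⟩
    rw [hlam]
    field_simp
    simp
  -- the count
  have hcount : (Finset.univ.filter fun v : Fin m → ZMod p => eval v f ≠ 0).card
      = (p - bb) * p ^ (m - aa - 1) := by
    have hfilter : (Finset.univ.filter fun v : Fin m → ZMod p => eval v f ≠ 0)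
        = Finset.univ.filter P := Finset.filter_congr fun v _ => by rw [hevalf v]
    rw [hfilter]
    -- transport along the affine equivalence T
    set T : (Fin m → ZMod p) ≃ (Fin m → ZMod p) :=
      { toFun := fun v i => if i ∈ A then v i - s₁ i - lam i * (v k - s₁ k) else v i
        invFun := fun w i => if i ∈ A then w i + s₁ i + lam i * (w k - s₁ k) else w i
        left_inv := by
          intro v
          funext i
          by_cases hi : i ∈ A
          · simp only [if_pos hi, if_neg hkA]
            ring
          · simp only [if_neg hi]
        right_inv := by
          intro w
          funext i
          by_cases hi : i ∈ A
          · simp only [if_pos hi, if_neg hkA]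
            ring
          · simp only [if_neg hi] } with hT
    have hTk : ∀ v, (T v) k = v k := fun v => by simp [hT, hkA]
    have hTA : ∀ v, ∀ i ∈ A, (T v) i = v i - s₁ i - lam i * (v k - s₁ k) :=
      fun v i hi => by simp [hT, if_pos hi]
    have hcard1 : (Finset.univ.filter P).card
        = (Finset.univ.filter fun w : Fin m → ZMod p =>
            (∀ i ∈ A, w i = 0) ∧ w k ∉ Cs).card := by
      apply Finset.card_equiv T
      intro v
      simp only [Finset.mem_filter, Finset.mem_univ, true_and]
      rw [hP]
      apply and_congr
      · exact forall₂_congr fun i hi => by rw [hTA v i hi]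
      · rw [hTk v]
    rw [hcard1]
    -- identify with a piFinset
    have hpi : (Finset.univ.filter fun w : Fin m → ZMod p => (∀ i ∈ A, w i = 0) ∧ w k ∉ Cs)
        = Fintype.piFinset (fun i : Fin m =>
            if i ∈ A then ({0} : Finset (ZMod p)) else if i = k then Csᶜ else Finset.univ) := by
      ext w
      simp only [Finset.mem_filter, Finset.mem_univ, true_and, Fintype.mem_piFinset]
      constructor
      · rintro ⟨h1, h2⟩ i
        by_cases hi : i ∈ A
        · simp [if_pos hi, h1 i hi]
        · by_cases hik : i = k
          · subst hik
            simp [if_neg hi, Finset.mem_compl, h2]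
          · simp [if_neg hi, if_neg hik]
      · intro h
        constructor
        · intro i hi
          have := h i
          simpa [if_pos hi] using this
        · have := h k
          simpa [hkA] using this
    rw [hpi, Fintype.card_piFinset]
    -- compute the product
    have hsplit := Finset.prod_mul_prod_compl A (fun i : Fin m =>
      (if i ∈ A then ({0} : Finset (ZMod p)) else if i = k then Csᶜ else Finset.univ).card)
    rw [← hsplit]
    have h1 : ∏ i ∈ A, (if i ∈ A then ({0} : Finset (ZMod p))
        else if i = k then Csᶜ else Finset.univ).card = 1 := by
      apply Finset.prod_eq_one
      intro i hi
      simp [if_pos hi]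
    have hkc : k ∈ Aᶜ := Finset.mem_compl.mpr hkA
    have h2 : ∏ i ∈ Aᶜ, (if i ∈ A then ({0} : Finset (ZMod p))
        else if i = k then Csᶜ else Finset.univ).card = (p - bb) * p ^ (m - aa - 1) := by
      rw [← Finset.mul_prod_erase _ _ hkc]
      have hck : (if k ∈ A then ({0} : Finset (ZMod p))
          else if k = k then Csᶜ else Finset.univ).card = p - bb := by
        rw [if_neg hkA, if_pos rfl, Finset.card_compl, hCs, ZMod.card]
      rw [hck]
      congr 1
      have hrest : ∀ i ∈ (Aᶜ).erase k, (if i ∈ A then ({0} : Finset (ZMod p))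
          else if i = k then Csᶜ else Finset.univ).card = p := by
        intro i hi
        obtain ⟨hik, hiA⟩ := Finset.mem_erase.mp hi
        rw [if_neg (Finset.mem_compl.mp hiA), if_neg hik, Finset.card_univ, ZMod.card]
      rw [Finset.prod_congr rfl hrest, Finset.prod_const]
      congr 1
      rw [Finset.card_erase_of_mem hkc, Finset.card_compl, hA]
      simp
    rw [h1, h2, one_mul]
  -- degree bound for g
  have hgdeg : g.totalDegree ≤ aa * (p-1) + bb := by
    rw [hg]
    calc ((∏ i ∈ A, (1 - ell i ^(p-1))) * ∏ c ∈ Cs, (X k - C c)).totalDegree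
        ≤ (∏ i ∈ A, (1 - ell i ^(p-1))).totalDegree
          + (∏ c ∈ Cs, (X k - C c : MvPolynomial (Fin m) (ZMod p))).totalDegree :=
          totalDegree_mul _ _
    _ ≤ (∑ i ∈ A, (1 - ell i ^(p-1)).totalDegree)
          + ∑ c ∈ Cs, (X k - C c : MvPolynomial (Fin m) (ZMod p)).totalDegree :=
          add_le_add (totalDegree_finset_prod _ _) (totalDegree_finset_prod _ _)
    _ ≤ (∑ _i ∈ A, (p-1)) + ∑ _c ∈ Cs, 1 := by
          apply add_le_add <;> apply Finset.sum_le_sum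
          · intro i _
            calc (1 - ell i ^(p-1)).totalDegree
                ≤ max (1 : MvPolynomial (Fin m) (ZMod p)).totalDegree
                  ((ell i ^(p-1)).totalDegree) :=
                  totalDegree_sub _ _
            _ ≤ p - 1 := by
                rw [totalDegree_one]
                simp only [max_le_iff]
                refine ⟨by omega, ?_⟩
                calc (ell i ^(p-1)).totalDegree ≤ (p-1) * (ell i).totalDegree :=
                      totalDegree_pow _ _
                _ ≤ (p-1) * 1 := by
                    apply Nat.mul_le_mul_left
                    rw [hell]
                    calc (X i - C (s₁ i) - C (lam i) * (X k - C (s₁ k))).totalDegree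
                        ≤ max (X i - C (s₁ i) : MvPolynomial (Fin m) (ZMod p)).totalDegree
                          (C (lam i) * (X k - C (s₁ k)) : MvPolynomial (Fin m) (ZMod p)).totalDegree :=
                        totalDegree_sub _ _
                    _ ≤ 1 := by
                        simp only [max_le_iff]
                        constructor
                        · exact (totalDegree_sub_C_le _ _).trans (by simp [totalDegree_X])
                        · calc (C (lam i) * (X k - C (s₁ k))
                              : MvPolynomial (Fin m) (ZMod p)).totalDegree
                              ≤ (C (lam i) : MvPolynomial (Fin m) (ZMod p)).totalDegree
                                + (X k - C (s₁ k) : MvPolynomial (Fin m) (ZMod p)).totalDegree :=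
                                totalDegree_mul _ _
                          _ ≤ 0 + 1 := add_le_add (by simp [totalDegree_C])
                                ((totalDegree_sub_C_le _ _).trans (by simp [totalDegree_X]))
                          _ = 1 := by omega
                _ = p - 1 := by omega
          · intro c _
            exact (totalDegree_sub_C_le _ _).trans (by simp [totalDegree_X])
    _ = aa * (p-1) + bb := by
          rw [Finset.sum_const, Finset.sum_const, hA, hCs, smul_eq_mul, smul_eq_mul, mul_one]
  refine ⟨f, ?_, fun i => degreeOf_reduceAll hp g i, (totalDegree_reduceAll_le g).trans hgdeg,
    ?_, ?_, hcount⟩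
  · intro h0
    have := (hevalf s₁).mpr hP1
    rw [h0] at this
    simp at this
  · simp only [Finset.mem_filter, Finset.mem_univ, true_and]
    exact (hevalf s₁).mpr hP1
  · simp only [Finset.mem_filter, Finset.mem_univ, true_and]
    exact (hevalf s₂).mpr hP2


end RMaux

/-- Let `0 ≤ r ≤ m(p−1)`, write `r = a(p−1)+b` with
`0 ≤ b ≤ p−2`, and let `d = d_RM(r,m)` be the natural number with
`p·d = (p−b)·p^{m−a}`; suppose `d ≥ 3`.  Then for every pair of distinct
puncture locations `s₁ ≠ s₂ ∈ 𝔽_p^m`, the minimum over all nonzero reduced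
polynomials `f` of total degree at most `r` of
`#{v : v ∉ {s₁,s₂} ∧ f(v) ≠ 0}` equals `d − 2`. -/
theorem twice_punctured_reedMuller_distance (p m r a b d : ℕ) [Fact p.Prime]
    (hm : 1 ≤ m) (hr : r ≤ m * (p - 1))
    (hab : r = a * (p - 1) + b) (hb : b ≤ p - 2)
    (hd : p * d = (p - b) * p ^ (m - a)) (hd3 : 3 ≤ d)
    (s₁ s₂ : Fin m → ZMod p) (hs : s₁ ≠ s₂) :
    IsLeast {n : ℕ | ∃ f : MvPolynomial (Fin m) (ZMod p), f ≠ 0 ∧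
      (∀ i, f.degreeOf i ≤ p - 1) ∧ f.totalDegree ≤ r ∧
      n = (Finset.univ.filter
        fun v : Fin m → ZMod p =>
          v ≠ s₁ ∧ v ≠ s₂ ∧ MvPolynomial.eval v f ≠ 0).card}
      (d - 2) := by
  have hp : 2 ≤ p := (Fact.out : p.Prime).two_le
  have hbp : b < p - 1 := by omega
  -- a < m
  have ham : a < m := by
    by_contra hc
    have h0 : m - a = 0 := by omega
    rw [h0, pow_zero, mul_one] at hd
    have : p * d ≤ p * 1 := by omega
    have := Nat.le_of_mul_le_mul_left this (by omega : 0 < p)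
    omega
  -- d = (p - b) * p ^ (m - a - 1)
  have hd' : d = (p - b) * p ^ (m - a - 1) := by
    have hpow : p ^ (m - a) = p * p ^ (m - a - 1) := by
      rw [← pow_succ']
      congr 1
      omega
    rw [hpow] at hd
    have : p * d = p * ((p - b) * p ^ (m - a - 1)) := by rw [hd]; ring
    exact Nat.eq_of_mul_eq_mul_left (by omega) this
  -- a splitting of the punctured count, valid for any f
  have hsplit : ∀ f : MvPolynomial (Fin m) (ZMod p),
      (Finset.univ.filter fun v : Fin m → ZMod p =>
          v ≠ s₁ ∧ v ≠ s₂ ∧ MvPolynomial.eval v f ≠ 0)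
      = (Finset.univ.filter fun v : Fin m → ZMod p =>
          MvPolynomial.eval v f ≠ 0) \ {s₁, s₂} := by
    intro f
    ext v
    simp only [Finset.mem_filter, Finset.mem_univ, true_and, Finset.mem_sdiff,
      Finset.mem_insert, Finset.mem_singleton]
    tauto
  constructor
  · -- membership: construct the minimising polynomial
    obtain ⟨k, hk⟩ := Function.ne_iff.mp hs
    obtain ⟨A, hAsub, hA⟩ := Finset.exists_subset_card_eq (s := Finset.univ.erase k) (n := a)
      (by rw [Finset.card_erase_of_mem (Finset.mem_univ k), Finset.card_univ,
        Fintype.card_fin]; omega)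
    have hkA : k ∉ A := fun h => by
      have := hAsub h
      exact (Finset.mem_erase.mp this).1 rfl
    obtain ⟨Cs, hCsub, hCs⟩ := Finset.exists_subset_card_eq
      (s := (Finset.univ : Finset (ZMod p)) \ {s₁ k, s₂ k}) (n := b)
      (by
        rw [Finset.card_sdiff_of_subset (Finset.subset_univ _), Finset.card_univ, ZMod.card,
          Finset.card_pair hk]
        omega)
    have h1C : s₁ k ∉ Cs := fun h => by
      have := hCsub h
      simp [Finset.mem_sdiff] at this
    have h2C : s₂ k ∉ Cs := fun h => by
      have := hCsub h
      simp [Finset.mem_sdiff] at this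
    obtain ⟨f, hf0, hfred, hfdeg, hm1, hm2, hfcount⟩ :=
      RMaux.exists_good_poly p k A hkA hA Cs hCs s₁ s₂ hk h1C h2C
    refine ⟨f, hf0, hfred, by rw [hab]; exact hfdeg, ?_⟩
    rw [hsplit f]
    have hsub2 : ({s₁, s₂} : Finset (Fin m → ZMod p)) ⊆
        (Finset.univ.filter fun v : Fin m → ZMod p => MvPolynomial.eval v f ≠ 0) := by
      intro v hv
      rcases Finset.mem_insert.mp hv with h | h
      · exact h ▸ hm1
      · rw [Finset.mem_singleton] at h
        exact h ▸ hm2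
    rw [Finset.card_sdiff_of_subset hsub2, hfcount, Finset.card_pair hs, ← hd']
  · -- lower bound
    rintro n ⟨f, hf0, hfred, hfdeg, rfl⟩
    have hcount : d ≤ (Finset.univ.filter fun v : Fin m → ZMod p =>
        MvPolynomial.eval v f ≠ 0).card := by
      have h1 : RMaux.pd p r m = p * d := by
        rw [RMaux.pd_eq hp hab hb, hd]
      have h2 : RMaux.pd p r m ≤ RMaux.pd p f.totalDegree m :=
        RMaux.pd_anti hp hfdeg hr
      have h3 := RMaux.count_ge p m f hf0 hfred
      have : p * d ≤ p * (Finset.univ.filter fun v : Fin m → ZMod p =>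
          MvPolynomial.eval v f ≠ 0).card := by omega
      exact Nat.le_of_mul_le_mul_left this (by omega)
    rw [hsplit f]
    have h4 := Finset.le_card_sdiff ({s₁, s₂} : Finset (Fin m → ZMod p))
      (Finset.univ.filter fun v : Fin m → ZMod p => MvPolynomial.eval v f ≠ 0)
    have h5 : ({s₁, s₂} : Finset (Fin m → ZMod p)).card = 2 := Finset.card_pair hs
    omega
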